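/- Let A be a finite-dimensional commutative ℚ-algebra with unit of dimension n ≥ 3, and let Λ = ℤ[a] be an order generated by a single element a whose powers 1, a, ..., a^{n-1} form a ℤ-basis of Λ. Define L = ℤ-span of {1, a, 2a², 2a³, ..., 2a^{n-1}}. Then L^k = ℤ-span of {1, a, ..., a^k, 2a^{k+1}, ..., 2a^{n-1}} for 1 ≤ k ≤ n-2, and L^{n-1} = Λ; in particular L, L², ..., L^{n-2} are strictly increasing and not invertible. -/
import Mathlib


def IsFullLattice {A : Type*} [CommRing A] [Algebra ℚ A] (L : Submodule ℤ A) : Prop :=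
  L.FG ∧ Submodule.span ℚ (L : Set A) = ⊤

def IsInvLat {A : Type*} [CommRing A] [Algebra ℚ A] (L : Submodule ℤ A) : Prop :=
  ∃ B : Submodule ℤ A, IsFullLattice B ∧ L * B = L / L

namespace Stmt9Aux

set_option linter.unusedSectionVars false

variable {A : Type*} [CommRing A] [Algebra ℚ A]

/-- The lattice spanned by 1, a, ..., a^k, 2a^{k+1}, ..., 2a^{n-1}. -/
def M (a : A) (n k : ℕ) : Submodule ℤ A :=
  Submodule.span ℤ (Set.range fun i : Fin n =>
    if (i : ℕ) ≤ k then a ^ (i : ℕ) else 2 * a ^ (i : ℕ))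

/-- The order Λ = ℤ[a]. -/
def Lam (a : A) (n : ℕ) : Submodule ℤ A :=
  Submodule.span ℤ (Set.range fun i : Fin n => a ^ (i : ℕ))

lemma pow_mem_M (a : A) {n k m : ℕ} (hm : m < n) (hmk : m ≤ k) : a ^ m ∈ M a n k := by
  apply Submodule.subset_span
  exact ⟨⟨m, hm⟩, by simp [hmk]⟩

lemma two_pow_mem_M (a : A) {n k m : ℕ} (hm : m < n) : 2 * a ^ m ∈ M a n k := by
  by_cases h : m ≤ k
  · have h1 := pow_mem_M a hm h
    have : (2 : ℤ) • a ^ m = 2 * a ^ m := by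
      rw [two_smul, two_mul]
    rw [← this]
    exact Submodule.smul_mem _ _ h1
  · exact Submodule.subset_span ⟨⟨m, hm⟩, by simp [h]⟩

lemma pow_mem_Lam (a : A) {n m : ℕ} (hn : 2 ≤ n)
    (hord : Lam a n * Lam a n ≤ Lam a n) : a ^ m ∈ Lam a n := by
  induction m with
  | zero => exact Submodule.subset_span ⟨⟨0, by omega⟩, by simp⟩
  | succ m ih =>
      have ha : a ∈ Lam a n := by
        have h1 : a ^ ((⟨1, by omega⟩ : Fin n) : ℕ) ∈ Lam a n :=
          Submodule.subset_span ⟨⟨1, by omega⟩, rfl⟩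
        simpa using h1
      rw [pow_succ]
      exact Submodule.mul_le.1 hord _ ih _ ha

lemma M_le_Lam (a : A) (n k : ℕ) : M a n k ≤ Lam a n := by
  rw [M, Submodule.span_le]
  rintro x ⟨i, rfl⟩
  by_cases h : (i : ℕ) ≤ k
  · simp only [h, if_true]
    exact Submodule.subset_span ⟨i, rfl⟩
  · simp only [h, if_false]
    have h1 : a ^ (i : ℕ) ∈ Lam a n := Submodule.subset_span ⟨i, rfl⟩
    have : (2 : ℤ) • a ^ (i : ℕ) = 2 * a ^ (i : ℕ) := by rw [two_smul, two_mul]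
    rw [← this]
    exact Submodule.smul_mem _ _ h1

lemma two_mul_mem_M (a : A) {n k : ℕ} {x : A} (hx : x ∈ Lam a n) : 2 * x ∈ M a n k := by
  induction hx using Submodule.span_induction with
  | mem y hy =>
      obtain ⟨i, rfl⟩ := hy
      exact two_pow_mem_M a i.isLt
  | zero => simpa using Submodule.zero_mem (M a n k)
  | add y z _ _ hy hz => rw [mul_add]; exact Submodule.add_mem _ hy hz
  | smul c y _ hy =>
      rw [mul_smul_comm]
      exact Submodule.smul_mem _ _ hy

lemma one_mem_M (a : A) {n k : ℕ} (hn : 1 ≤ n) : 1 ∈ M a n k := by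
  have := pow_mem_M a (show 0 < n by omega) (Nat.zero_le k)
  simpa using this

lemma M_mul_M (a : A) {n k : ℕ} (hord : Lam a n * Lam a n ≤ Lam a n)
    (hk : k + 2 ≤ n) : M a n k * M a n 1 = M a n (k + 1) := by
  have hn2 : 2 ≤ n := by omega
  apply le_antisymm
  · rw [M, M, Submodule.span_mul_span, Submodule.span_le]
    rintro x hx
    rw [Set.mem_mul] at hx
    obtain ⟨y, hy, z, hz, rfl⟩ := hx
    obtain ⟨i, rfl⟩ := hy
    obtain ⟨j, rfl⟩ := hz
    by_cases hi : (i : ℕ) ≤ k <;> by_cases hj : (j : ℕ) ≤ 1 <;>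
      simp only [hi, hj, if_true, if_false]
    · rw [← pow_add]
      exact pow_mem_M a (by omega) (by omega)
    · have : a ^ (i : ℕ) * (2 * a ^ (j : ℕ)) = 2 * a ^ ((i : ℕ) + (j : ℕ)) := by
        rw [pow_add]; ring
      rw [this]
      exact two_mul_mem_M a (pow_mem_Lam a hn2 hord)
    · have : 2 * a ^ (i : ℕ) * a ^ (j : ℕ) = 2 * a ^ ((i : ℕ) + (j : ℕ)) := by
        rw [pow_add]; ring
      rw [this]
      exact two_mul_mem_M a (pow_mem_Lam a hn2 hord)
    · have : 2 * a ^ (i : ℕ) * (2 * a ^ (j : ℕ)) = 2 * (2 * a ^ ((i : ℕ) + (j : ℕ))) := by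
        rw [pow_add]; ring
      rw [this]
      apply two_mul_mem_M a
      have h1 : a ^ ((i : ℕ) + (j : ℕ)) ∈ Lam a n := pow_mem_Lam a hn2 hord
      have h2 : (2 : ℤ) • a ^ ((i : ℕ) + (j : ℕ)) = 2 * a ^ ((i : ℕ) + (j : ℕ)) := by
        rw [two_smul, two_mul]
      rw [← h2]
      exact Submodule.smul_mem _ _ h1
  · rw [show M a n (k+1) = Submodule.span ℤ _ from rfl, Submodule.span_le]
    rintro x ⟨i, rfl⟩
    by_cases hi : (i : ℕ) ≤ k + 1 <;> simp only [hi, if_true, if_false]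
    · rcases Nat.eq_zero_or_pos (i : ℕ) with h0 | h0
      · rw [h0, pow_zero, show (1 : A) = 1 * 1 from (one_mul 1).symm]
        exact Submodule.mul_mem_mul (one_mem_M a (by omega)) (one_mem_M a (by omega))
      · obtain ⟨m, hm⟩ : ∃ m, (i : ℕ) = m + 1 := ⟨(i : ℕ) - 1, by omega⟩
        rw [hm, pow_succ]
        refine Submodule.mul_mem_mul (pow_mem_M a (by omega) (by omega)) ?_
        have := pow_mem_M a (show 1 < n by omega) (le_refl 1)
        simpa using this
    · rw [show 2 * a ^ (i : ℕ) = 2 * a ^ (i : ℕ) * 1 from (mul_one _).symm]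
      refine Submodule.mul_mem_mul ?_ (one_mem_M a (by omega))
      exact Submodule.subset_span ⟨i, by simp [show ¬ (i:ℕ) ≤ k by omega]⟩

lemma pow_eq_M (a : A) {n : ℕ} (hord : Lam a n * Lam a n ≤ Lam a n) :
    ∀ k, 1 ≤ k → k + 1 ≤ n → (M a n 1) ^ k = M a n k := by
  intro k
  induction k with
  | zero => omega
  | succ k ih =>
      intro _ hk1
      rcases Nat.eq_zero_or_pos k with h0 | h0
      · subst h0; rw [pow_one]
      · rw [pow_succ, ih h0 (by omega), M_mul_M a hord (by omega)]

end Stmt9Aux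

namespace Stmt9Aux

set_option linter.unusedSectionVars false

variable {A : Type*} [CommRing A] [Algebra ℚ A]

lemma one_mem_Lam (a : A) {n : ℕ} (hn : 1 ≤ n) : 1 ∈ Lam a n := by
  have h1 : a ^ ((⟨0, by omega⟩ : Fin n) : ℕ) ∈ Lam a n :=
    Submodule.subset_span ⟨⟨0, by omega⟩, rfl⟩
  simpa using h1

lemma Lam_mul_absorb (a : A) {n : ℕ} (hn : 1 ≤ n)
    (hord : Lam a n * Lam a n ≤ Lam a n)
    (S : Submodule ℤ A) (hS : S ≤ Lam a n) (h1 : 1 ∈ S) :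
    Lam a n * S = Lam a n := by
  apply le_antisymm
  · exact le_trans (mul_le_mul' le_rfl hS) hord
  · calc Lam a n = Lam a n * 1 := (mul_one _).symm
      _ ≤ Lam a n * S := mul_le_mul' le_rfl (Submodule.one_le.2 h1)

lemma one_mem_pow (a : A) {n : ℕ} (hn : 1 ≤ n) (k : ℕ) : 1 ∈ (M a n 1) ^ k := by
  induction k with
  | zero => rw [pow_zero]; exact Submodule.one_le.1 le_rfl
  | succ k ih =>
      rw [pow_succ, show (1 : A) = 1 * 1 from (one_mul 1).symm]
      exact Submodule.mul_mem_mul ih (one_mem_M a hn)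

lemma pow_le_Lam (a : A) {n : ℕ} (hn : 1 ≤ n)
    (hord : Lam a n * Lam a n ≤ Lam a n) (k : ℕ) : (M a n 1) ^ k ≤ Lam a n := by
  induction k with
  | zero =>
      rw [pow_zero, Submodule.one_eq_span, Submodule.span_le]
      rintro x rfl
      exact one_mem_Lam a hn
  | succ k ih =>
      rw [pow_succ]
      exact le_trans (mul_le_mul' ih (M_le_Lam a n 1)) hord

lemma Lam_mul_pow (a : A) {n : ℕ} (hn : 1 ≤ n)
    (hord : Lam a n * Lam a n ≤ Lam a n) (j : ℕ) :
    Lam a n * (M a n 1) ^ j = Lam a n :=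
  Lam_mul_absorb a hn hord _ (pow_le_Lam a hn hord j) (one_mem_pow a hn j)

lemma M_top (a : A) {n : ℕ} (hn : 1 ≤ n) : M a n (n - 1) = Lam a n := by
  rw [M, Lam]
  congr 1
  apply congrArg
  funext i
  rw [if_pos (by omega : (i : ℕ) ≤ n - 1)]

lemma pow_top (a : A) {n : ℕ} (hn : 3 ≤ n)
    (hord : Lam a n * Lam a n ≤ Lam a n) {m : ℕ} (hm : n - 1 ≤ m) :
    (M a n 1) ^ m = Lam a n := by
  have : m = (n - 1) + (m - (n - 1)) := by omega
  rw [this, pow_add, pow_eq_M a hord (n - 1) (by omega) (by omega), M_top a (by omega),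
    Lam_mul_pow a (by omega) hord]

lemma pow_notMem_M [FiniteDimensional ℚ A] {n t : ℕ} (a : A)
    (hdim : Module.finrank ℚ A = n)
    (hli : LinearIndependent ℚ (fun i : Fin n => a ^ (i : ℕ))) (ht : t + 1 < n) :
    a ^ (t + 1) ∉ M a n t := by
  have hcard : Fintype.card (Fin n) = Module.finrank ℚ A := by simp [hdim]
  haveI : Nonempty (Fin n) := ⟨⟨0, by omega⟩⟩
  set b := basisOfLinearIndependentOfCardEqFinrank hli hcard with hb
  have hbe : ∀ i : Fin n, b i = a ^ (i : ℕ) := fun i => by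
    rw [hb, coe_basisOfLinearIndependentOfCardEqFinrank]
  set j : Fin n := ⟨t + 1, ht⟩ with hj
  set f : A →ₗ[ℤ] ℚ := (b.coord j).restrictScalars ℤ with hfdef
  have hf : ∀ i : Fin n, f (a ^ (i : ℕ)) = if i = j then 1 else 0 := by
    intro i
    rw [← hbe i, hfdef]
    simp only [LinearMap.coe_restrictScalars, Module.Basis.coord_apply, Module.Basis.repr_self]
    exact Finsupp.single_apply
  have key : M a n t ≤ Submodule.comap f (Submodule.span ℤ ({2} : Set ℚ)) := by
    rw [M, Submodule.span_le]
    rintro x ⟨i, rfl⟩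
    simp only [Set.mem_preimage, SetLike.mem_coe, Submodule.mem_comap]
    by_cases h : (i : ℕ) ≤ t
    · rw [if_pos h, hf]
      have hne : i ≠ j := by
        intro he
        rw [he, hj] at h
        simp only [Fin.val_mk] at h
        omega
      rw [if_neg hne]
      exact Submodule.zero_mem _
    · rw [if_neg h]
      have h2 : 2 * a ^ (i : ℕ) = (2 : ℤ) • a ^ (i : ℕ) := by rw [two_smul, two_mul]
      rw [h2, map_smul, hf]
      by_cases he : i = j
      · rw [if_pos he]
        have : (2 : ℤ) • (1 : ℚ) = (1 : ℤ) • (2 : ℚ) := by norm_num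
        rw [this]
        exact Submodule.smul_mem _ _ (Submodule.subset_span rfl)
      · rw [if_neg he, smul_zero]
        exact Submodule.zero_mem _
  intro hmem
  have h3 := key hmem
  rw [Submodule.mem_comap] at h3
  have h4 : f (a ^ (t + 1)) = 1 := by
    have := hf j
    rw [if_pos rfl] at this
    simpa [hj] using this
  rw [h4, Submodule.mem_span_singleton] at h3
  obtain ⟨c, hc⟩ := h3
  have : ((2 * c : ℤ) : ℚ) = ((1 : ℤ) : ℚ) := by push_cast; rw [zsmul_eq_mul] at hc; linarith
  have := Int.cast_injective (α := ℚ) this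
  omega

lemma M_le_M (a : A) {n k : ℕ} : M a n k ≤ M a n (k + 1) := by
  rw [M, Submodule.span_le]
  rintro x ⟨i, rfl⟩
  by_cases h : (i : ℕ) ≤ k <;> simp only [h, if_true, if_false]
  · exact pow_mem_M a i.isLt (by omega)
  · exact two_pow_mem_M a i.isLt

lemma M_lt_M [FiniteDimensional ℚ A] (a : A) {n k : ℕ}
    (hdim : Module.finrank ℚ A = n)
    (hli : LinearIndependent ℚ (fun i : Fin n => a ^ (i : ℕ)))
    (hk : k + 2 ≤ n) : M a n k < M a n (k + 1) := by
  refine lt_of_le_of_ne (M_le_M a) ?_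
  intro he
  have h1 : a ^ (k + 1) ∈ M a n (k + 1) := pow_mem_M a (by omega) le_rfl
  rw [← he] at h1
  exact pow_notMem_M a hdim hli (by omega) h1

lemma not_inv [FiniteDimensional ℚ A] (a : A) {n k : ℕ} (hn : 3 ≤ n)
    (hdim : Module.finrank ℚ A = n)
    (hli : LinearIndependent ℚ (fun i : Fin n => a ^ (i : ℕ)))
    (hord : Lam a n * Lam a n ≤ Lam a n)
    (hk1 : 1 ≤ k) (hk : k ≤ n - 2) : ¬ IsInvLat ((M a n 1) ^ k) := by
  rintro ⟨B, -, hmul⟩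
  set L := M a n 1 with hL
  set D := L ^ k / L ^ k with hD
  have h1D : (1 : A) ∈ D :=
    Submodule.mem_div_iff_forall_mul_mem.2 fun y hy => by simpa using hy
  have hDle : D ≤ Lam a n := by
    intro x hx
    have : x * 1 ∈ L ^ k := Submodule.mem_div_iff_forall_mul_mem.1 hx 1 (one_mem_pow a (by omega) k)
    rw [mul_one] at this
    exact pow_le_Lam a (by omega) hord k this
  have hkD : L ^ k * D ≤ L ^ k := Submodule.mul_le.2 fun m hm d hd => by
    rw [mul_comm]
    exact Submodule.mem_div_iff_forall_mul_mem.1 hd m hm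
  -- t = largest multiple of k that is ≤ n - 2
  set t := ((n - 2) / k) * k with htdef
  have hkt : k ≤ t := by
    have h1 : 1 ≤ (n - 2) / k := (Nat.one_le_div_iff (by omega)).2 hk
    calc k = 1 * k := (one_mul k).symm
      _ ≤ ((n - 2) / k) * k := Nat.mul_le_mul_right k h1
  have htn : t ≤ n - 2 := Nat.div_mul_le_self _ _
  have htk : n - 1 ≤ t + k := by
    have h1 : t + (n - 2) % k = n - 2 := by
      rw [htdef, mul_comm]; exact Nat.div_add_mod _ _
    have h2 : (n - 2) % k < k := Nat.mod_lt _ (by omega)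
    omega
  have hLamB : Lam a n * B = Lam a n := by
    calc Lam a n * B = (Lam a n * L ^ k) * B := by rw [Lam_mul_pow a (by omega) hord k]
      _ = Lam a n * (L ^ k * B) := mul_assoc _ _ _
      _ = Lam a n * D := by rw [hmul]
      _ = Lam a n := Lam_mul_absorb a (by omega) hord D hDle h1D
  have htD : L ^ t * D = L ^ t := by
    apply le_antisymm
    · have : L ^ t = L ^ k * L ^ (t - k) := by rw [← pow_add]; congr 1; omega
      rw [this, mul_right_comm]
      exact mul_le_mul' hkD le_rfl
    · calc L ^ t = L ^ t * 1 := (mul_one _).symm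
        _ ≤ L ^ t * D := mul_le_mul' le_rfl (Submodule.one_le.2 h1D)
  have hfinal : L ^ t = Lam a n := by
    calc L ^ t = L ^ t * D := htD.symm
      _ = L ^ t * (L ^ k * B) := by rw [hmul]
      _ = L ^ (t + k) * B := by rw [← mul_assoc, ← pow_add]
      _ = Lam a n * B := by rw [pow_top a hn hord htk]
      _ = Lam a n := hLamB
  have hMt : L ^ t = M a n t := pow_eq_M a hord t (by omega) (by omega)
  have hmem : a ^ (t + 1) ∈ M a n t := by
    rw [← hMt, hfinal]
    exact pow_mem_Lam a (by omega) hord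
  exact pow_notMem_M a hdim hli (by omega) hmem

end Stmt9Aux


theorem stmt_9 {A : Type*} [CommRing A] [Algebra ℚ A] [FiniteDimensional ℚ A]
    (n : ℕ) (hn : 3 ≤ n) (hdim : Module.finrank ℚ A = n) (a : A)
    (hli : LinearIndependent ℚ (fun i : Fin n => a ^ (i : ℕ)))
    (hord : (Submodule.span ℤ (Set.range fun i : Fin n => a ^ (i : ℕ))) *
            (Submodule.span ℤ (Set.range fun i : Fin n => a ^ (i : ℕ))) ≤
            Submodule.span ℤ (Set.range fun i : Fin n => a ^ (i : ℕ))) :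
    let Λ := Submodule.span ℤ (Set.range fun i : Fin n => a ^ (i : ℕ))
    let L := Submodule.span ℤ (Set.range fun i : Fin n =>
      if (i : ℕ) ≤ 1 then a ^ (i : ℕ) else 2 * a ^ (i : ℕ))
    (∀ k, 1 ≤ k → k ≤ n - 2 → L ^ k = Submodule.span ℤ (Set.range fun i : Fin n =>
      if (i : ℕ) ≤ k then a ^ (i : ℕ) else 2 * a ^ (i : ℕ))) ∧
    L ^ (n - 1) = Λ ∧
    (∀ k, 1 ≤ k → k ≤ n - 2 → L ^ k < L ^ (k + 1) ∧ ¬ IsInvLat (L ^ k)) := by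
  intro Λ L
  have hordL : Stmt9Aux.Lam a n * Stmt9Aux.Lam a n ≤ Stmt9Aux.Lam a n := hord
  have hL : L = Stmt9Aux.M a n 1 := rfl
  refine ⟨?_, ?_, ?_⟩
  · intro k hk1 hk2
    show L ^ k = Stmt9Aux.M a n k
    rw [hL]
    exact Stmt9Aux.pow_eq_M a hordL k hk1 (by omega)
  · show L ^ (n - 1) = Stmt9Aux.Lam a n
    rw [hL]
    exact Stmt9Aux.pow_top a hn hordL le_rfl
  · intro k hk1 hk2
    constructor
    · rw [hL, Stmt9Aux.pow_eq_M a hordL k hk1 (by omega),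
        Stmt9Aux.pow_eq_M a hordL (k + 1) (by omega) (by omega)]
      exact Stmt9Aux.M_lt_M a hdim hli (by omega)
    · rw [hL]
      exact Stmt9Aux.not_inv a hn hdim hli hordL hk1 hk2
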